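/- arXiv:2108.07504 — 2 statements merged into one kernel-verified Lean document; each statement's English description precedes it below -/
import Mathlib

section
/- Let Z ≥ 0, V ≥ 0, c ≥ 0, β ≥ 1, a > 0 and b > 0 be real numbers. Then the function P ↦ (Z/β)·(c + b/ln(1 + a·P))^β + (1/(2β²))·(c + b/ln(1 + a·P))^(2β) + V·P is convex on (0, ∞). -/
open Set Real

private lemma aux_T_convex {a b : ℝ} (ha : 0 < a) (hb : 0 < b) :
    ConvexOn ℝ (Set.Ioi 0) (fun P : ℝ => b / Real.log (1 + a*P)) := by
  refine ⟨convex_Ioi 0, ?_⟩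
  intro x hx y hy μ ν hμ hν hsum
  simp only [smul_eq_mul]
  have hax : (1:ℝ) < 1 + a*x := by nlinarith [mem_Ioi.mp hx]
  have hay : (1:ℝ) < 1 + a*y := by nlinarith [mem_Ioi.mp hy]
  set Lx := Real.log (1 + a*x) with hLx
  set Ly := Real.log (1 + a*y) with hLy
  have hLxpos : 0 < Lx := Real.log_pos hax
  have hLypos : 0 < Ly := Real.log_pos hay
  have hmix : 0 < μ * Lx + ν * Ly := by
    rcases eq_or_lt_of_le hμ with h | h
    · rw [← h] at hsum ⊢; simp at hsum; nlinarith
    · nlinarith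
  -- concavity of log
  have hconc : μ * Lx + ν * Ly ≤ Real.log (1 + a*(μ*x+ν*y)) := by
    have := strictConcaveOn_log_Ioi.concaveOn.2 (mem_Ioi.mpr (by linarith : (0:ℝ) < 1 + a*x))
      (mem_Ioi.mpr (by linarith : (0:ℝ) < 1 + a*y)) hμ hν hsum
    simp only [smul_eq_mul] at this
    have heq : μ * (1 + a*x) + ν * (1 + a*y) = 1 + a*(μ*x+ν*y) := by nlinarith
    rw [heq] at this
    exact this
  have hLz : 0 < Real.log (1 + a*(μ*x+ν*y)) := lt_of_lt_of_le hmix hconc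
  have h1 : b / Real.log (1 + a*(μ*x+ν*y)) ≤ b / (μ * Lx + ν * Ly) :=
    div_le_div_of_nonneg_left hb.le hmix hconc
  -- convexity of inverse
  have hinv : (μ * Lx + ν * Ly)⁻¹ ≤ μ * Lx⁻¹ + ν * Ly⁻¹ := by
    have := (convexOn_zpow (-1 : ℤ)).2 (mem_Ioi.mpr hLxpos) (mem_Ioi.mpr hLypos) hμ hν hsum
    simpa [zpow_neg, smul_eq_mul] using this
  have h2 : b / (μ * Lx + ν * Ly) ≤ μ * (b / Lx) + ν * (b / Ly) := by
    rw [div_eq_mul_inv, div_eq_mul_inv, div_eq_mul_inv]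
    nlinarith [mul_le_mul_of_nonneg_left hinv hb.le]
  exact h1.trans h2

private lemma aux_pow_convex {c β a b : ℝ} (hc : 0 ≤ c) (hβ : 1 ≤ β)
    (ha : 0 < a) (hb : 0 < b) :
    ConvexOn ℝ (Set.Ioi 0) (fun P : ℝ => (c + b / Real.log (1 + a*P)) ^ β) := by
  have hT := aux_T_convex ha hb
  have hg : ConvexOn ℝ (Set.Ioi 0) (fun P : ℝ => c + b / Real.log (1 + a*P)) := by
    exact (ConvexOn.add (convexOn_const c (convex_Ioi 0)) hT)
  refine ⟨convex_Ioi 0, ?_⟩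
  intro x hx y hy μ ν hμ hν hsum
  simp only [smul_eq_mul]
  set g : ℝ → ℝ := fun P => c + b / Real.log (1 + a*P) with hgdef
  have hgnn : ∀ P : ℝ, P ∈ Set.Ioi (0:ℝ) → 0 ≤ g P := by
    intro P hP
    have : (1:ℝ) < 1 + a*P := by nlinarith [mem_Ioi.mp hP]
    have := Real.log_pos this
    have : 0 ≤ b / Real.log (1 + a*P) := div_nonneg hb.le this.le
    simp only [hgdef]; linarith
  have hconv := hg.2 hx hy hμ hν hsum
  simp only [smul_eq_mul] at hconv
  have hmem : μ * x + ν * y ∈ Set.Ioi (0:ℝ) := (convex_Ioi 0) hx hy hμ hν hsum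
  have hmono : g (μ*x+ν*y) ^ β ≤ (μ * g x + ν * g y) ^ β :=
    Real.rpow_le_rpow (hgnn _ hmem) hconv (by linarith)
  have hrpow := (convexOn_rpow hβ).2 (mem_Ici.mpr (hgnn x hx)) (mem_Ici.mpr (hgnn y hy)) hμ hν hsum
  simp only [smul_eq_mul] at hrpow
  exact hmono.trans hrpow

theorem stmt_6 (Z V c β a b : ℝ) (hZ : 0 ≤ Z) (hV : 0 ≤ V) (hc : 0 ≤ c) (hβ : 1 ≤ β)
    (ha : 0 < a) (hb : 0 < b) :
    ConvexOn ℝ (Set.Ioi 0) (fun P : ℝ =>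
      (Z/β) * (c + b / Real.log (1 + a*P)) ^ β
      + (1/(2*β^2)) * (c + b / Real.log (1 + a*P)) ^ (2*β)
      + V * P) := by
  have hβ0 : (0:ℝ) < β := by linarith
  have h1 : ConvexOn ℝ (Set.Ioi 0)
      (fun P : ℝ => (Z/β) * (c + b / Real.log (1 + a*P)) ^ β) := by
    simpa [smul_eq_mul] using (aux_pow_convex hc hβ ha hb).smul (div_nonneg hZ hβ0.le)
  have h2 : ConvexOn ℝ (Set.Ioi 0)
      (fun P : ℝ => (1/(2*β^2)) * (c + b / Real.log (1 + a*P)) ^ (2*β)) := by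
    have h2β : (1:ℝ) ≤ 2*β := by linarith
    have := (aux_pow_convex hc h2β ha hb).smul
      (by positivity : (0:ℝ) ≤ 1/(2*β^2))
    simpa [smul_eq_mul] using this
  have h3 : ConvexOn ℝ (Set.Ioi 0) (fun P : ℝ => V * P) := by
    simpa [smul_eq_mul] using (convexOn_id (convex_Ioi (0:ℝ))).smul hV
  exact (h1.add h2).add h3
end

section
/- Let K, D, W, h, N₀, σ, ξ be positive real numbers, let ε' ∈ (0, 1), let x₀ ∈ ℝ, and let q ≤ q_th be real numbers. For P > 0 define T(P) = K·D / (W · log₂(1 + K·h·P/(W·N₀))), and set δ = q_th − q + exp((σ/ξ)·(1 − ε'^(−ξ)) − x₀). Then for every P > 0 satisfying q + T(P) − q_th > 0 and −ln(q + T(P) − q_th) − x₀ ≥ 0, the inequality (1 + (ξ/σ)·(−ln(q + T(P) − q_th) − x₀))^(−1/ξ) ≤ ε' holds if and only if P ≥ (W·N₀/(K·h))·(exp((K·D·ln 2/W)·(1/δ)) − 1). -/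
/-- Closed-form minimal transmit-power requirement from the GPD-approximated
URLLC queuing-delay constraint. -/
theorem stmt_16 (K D W h N₀ σ ξ : ℝ) (hK : 0 < K) (hD : 0 < D) (hW : 0 < W) (hh : 0 < h)
    (hN : 0 < N₀) (hσ : 0 < σ) (hξ : 0 < ξ) (ε' : ℝ) (hε' : ε' ∈ Set.Ioo (0:ℝ) 1)
    (x₀ q q_th : ℝ) (hq : q ≤ q_th) :
    ∀ P > 0,
      q + K*D / (W * Real.logb 2 (1 + K*h*P/(W*N₀))) - q_th > 0 →
      -Real.log (q + K*D / (W * Real.logb 2 (1 + K*h*P/(W*N₀))) - q_th) - x₀ ≥ 0 →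
      ((1 + (ξ/σ) * (-Real.log (q + K*D / (W * Real.logb 2 (1 + K*h*P/(W*N₀))) - q_th)
          - x₀)) ^ (-1/ξ) ≤ ε'
        ↔ P ≥ (W*N₀/(K*h)) * (Real.exp ((K*D*Real.log 2/W) *
            (1/(q_th - q + Real.exp ((σ/ξ)*(1 - ε' ^ (-ξ)) - x₀)))) - 1)) := by
  intro P hP hpos hy
  have hε0 : (0:ℝ) < ε' := hε'.1
  have hx : (0:ℝ) < 1 + K*h*P/(W*N₀) := by positivity
  set x := 1 + K*h*P/(W*N₀) with hxdef
  set L := Real.logb 2 x with hLdef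
  set E := Real.exp ((σ/ξ)*(1 - ε' ^ (-ξ)) - x₀) with hEdef
  have hE : 0 < E := Real.exp_pos _
  have hδ : 0 < q_th - q + E := by linarith
  have hT : 0 < K*D/(W*L) := by linarith
  have hWL : 0 < W*L := by
    rcases div_pos_iff.mp hT with ⟨_, h1⟩ | ⟨h1, _⟩
    · exact h1
    · nlinarith [mul_pos hK hD]
  set s := q + K*D/(W*L) - q_th with hsdef
  set y := -Real.log s - x₀ with hydef
  set t := (K*D*Real.log 2/W) * (1/(q_th - q + E)) with htdef
  have hA0 : (0:ℝ) < 1 + (ξ/σ) * y := by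
    have := mul_nonneg (div_pos hξ hσ).le hy
    linarith
  have hlg2 : (0:ℝ) < Real.log 2 := Real.log_pos one_lt_two
  have hLx : L = Real.log x / Real.log 2 := (Real.log_div_log).symm
  rw [ge_iff_le]
  calc (1 + (ξ/σ) * y) ^ (-1/ξ) ≤ ε'
      ↔ ε' ^ (-ξ) ≤ 1 + (ξ/σ) * y := by
        rw [← Real.log_le_log_iff (Real.rpow_pos_of_pos hA0 _) hε0,
            ← Real.log_le_log_iff (Real.rpow_pos_of_pos hε0 _) hA0,
            Real.log_rpow hA0, Real.log_rpow hε0]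
        have hid : (-1/ξ) * Real.log (1 + (ξ/σ) * y) * ξ = -Real.log (1 + (ξ/σ) * y) := by
          field_simp
        constructor <;> intro hc
        · have h2 := mul_le_mul_of_nonneg_right hc hξ.le
          rw [hid] at h2
          linarith
        · have h2 := mul_le_mul_of_nonneg_right hc (le_of_lt (by positivity : (0:ℝ) < 1/ξ))
          have hid2 : -ξ * Real.log ε' * (1/ξ) = -Real.log ε' := by field_simp
          rw [hid2] at h2
          have hid3 : Real.log (1 + (ξ/σ) * y) * (1/ξ) = -((-1/ξ) * Real.log (1 + (ξ/σ) * y)) := by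
            ring
          rw [hid3] at h2
          linarith
    _ ↔ Real.log s ≤ (σ/ξ)*(1 - ε' ^ (-ξ)) - x₀ := by
        constructor <;> intro hc
        · have h2 := mul_le_mul_of_nonneg_left
            (by linarith : ε' ^ (-ξ) - 1 ≤ (ξ/σ) * y) (div_pos hσ hξ).le
          have hid : (σ/ξ) * ((ξ/σ) * y) = y := by field_simp
          rw [hid] at h2
          rw [hydef] at h2
          linarith [h2]
        · have h2 := mul_le_mul_of_nonneg_left hc (div_pos hξ hσ).le
          have hid : (ξ/σ) * ((σ/ξ)*(1 - ε' ^ (-ξ)) - x₀)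
              = (1 - ε' ^ (-ξ)) - (ξ/σ) * x₀ := by field_simp
          rw [hid] at h2
          have : (ξ/σ) * y = (ξ/σ) * (-Real.log s) - (ξ/σ) * x₀ := by rw [hydef]; ring
          rw [this]
          have h3 : (ξ/σ) * Real.log s = (ξ/σ) * Real.log s := rfl
          nlinarith [h2]
    _ ↔ s ≤ E := Real.log_le_iff_le_exp hpos
    _ ↔ K*D/(W*L) ≤ q_th - q + E := by rw [hsdef]; constructor <;> intro <;> linarith
    _ ↔ t ≤ Real.log x := by
        rw [htdef, div_le_iff₀ hWL, (by rw [div_mul_div_comm, mul_one] :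
          (K*D*Real.log 2/W) * (1/(q_th - q + E))
          = (K*D*Real.log 2)/(W*(q_th - q + E))), div_le_iff₀ (by positivity)]
        have hkey : (q_th - q + E)*(W*L)*Real.log 2 = Real.log x * (W*(q_th - q + E)) := by
          rw [hLx]; field_simp
        rw [← hkey]
        exact (mul_le_mul_iff_left₀ hlg2).symm
    _ ↔ Real.exp t ≤ x := Real.le_log_iff_exp_le hx
    _ ↔ (W*N₀/(K*h)) * (Real.exp t - 1) ≤ P := by
        rw [hxdef]
        have hm : (0:ℝ) < W*N₀/(K*h) := by positivity
        have hid : (W*N₀/(K*h)) * (K*h*P/(W*N₀)) = P := by field_simp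
        constructor <;> intro hc
        · have h2 := mul_le_mul_of_nonneg_left
            (by linarith : Real.exp t - 1 ≤ K*h*P/(W*N₀)) hm.le
          rw [hid] at h2
          exact h2
        · rw [← hid] at hc
          have h2 := (mul_le_mul_iff_right₀ hm).mp hc
          linarith
end
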